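/- arXiv:1011.2044 — 7 statements merged into one kernel-verified Lean document; each statement's English description precedes it below -/
import Mathlib

section
/- Let k be a field, V a k-vector space, and φ a finite potent endomorphism of V. If W₁ and W₂ are both admissible subspaces for φ (i.e., each Wᵢ is finite-dimensional, φ(Wᵢ) ⊆ Wᵢ, and there exists nᵢ ≥ 1 with φ^{nᵢ}(V) ⊆ Wᵢ), then the ordinary determinant of the restriction (1+φ)|_{W₁} : W₁ → W₁ equals the ordinary determinant of (1+φ)|_{W₂} : W₂ → W₂. Hence the infinite determinant Det^k_V(1+φ) := det((1+φ)|_W) is well defined, independent of the choice of admissible W. -/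
open Polynomial Matrix


lemma matrix_det_one_add_of_isNilpotent {K : Type*} [Field K] {n : Type*} [DecidableEq n]
    [Fintype n] (A : Matrix n n K) (hA : IsNilpotent A) : (1 + A).det = 1 := by
  have hA' : IsNilpotent (-A) := hA.neg
  have hc : (-A).charpoly = X ^ (Fintype.card n) := by
    rw [← sub_eq_zero]
    exact (Matrix.isNilpotent_charpoly_sub_pow_of_isNilpotent hA').eq_zero
  have h1 : eval 1 ((-A).charpoly) = (1 + A).det := by
    rw [Matrix.charpoly, ← coe_evalRingHom, RingHom.map_det]
    congr 1
    ext i j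
    rcases eq_or_ne i j with rfl | hij
    · simp [Matrix.one_apply]
    · simp [charmatrix_apply, Matrix.one_apply, hij, Matrix.diagonal_apply]
  rw [← h1, hc]
  simp

lemma det_one_add_of_isNilpotent {K M : Type*} [Field K] [AddCommGroup M] [Module K M]
    [FiniteDimensional K M] (h : M →ₗ[K] M) (hn : IsNilpotent h) :
    LinearMap.det (1 + h) = 1 := by
  let b := Module.finBasis K M
  rw [← LinearMap.det_toMatrix b, map_add]
  have : LinearMap.toMatrix b b 1 = 1 := LinearMap.toMatrix_one b
  rw [this]
  exact matrix_det_one_add_of_isNilpotent _ (hn.map (LinearMap.toMatrixAlgEquiv b))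

lemma det_one_add_eq_det_restrict {K U : Type*} [Field K] [AddCommGroup U] [Module K U]
    [FiniteDimensional K U] (ψ : U →ₗ[K] U) (p : Submodule K U)
    (hinv : ∀ x ∈ p, ψ x ∈ p) (n : ℕ) (hr : LinearMap.range (ψ ^ n) ≤ p)
    (hp : ∀ x ∈ p, (1 + ψ) x ∈ p) :
    LinearMap.det (1 + ψ) = LinearMap.det ((1 + ψ).restrict hp) := by
  classical
  obtain ⟨q, hq⟩ := Submodule.exists_isCompl p
  set e := Submodule.prodEquivOfIsCompl p q hq with he
  set g : (p × q) →ₗ[K] (p × q) :=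
    (e.symm.toLinearMap.comp (1 + ψ)).comp e.toLinearMap with hg
  have hdet : LinearMap.det g = LinearMap.det (1 + ψ) := by
    have hee : (e.toLinearMap : p × q →ₗ[K] U) = (e.symm.symm.toLinearMap) := by
      rw [LinearEquiv.symm_symm]
    rw [hg, LinearMap.comp_assoc, hee]
    exact LinearMap.det_conj (1 + ψ) e.symm
  set h : q →ₗ[K] q :=
    ((LinearMap.snd K p q).comp e.symm.toLinearMap).comp (ψ.comp q.subtype) with hh
  have key : ∀ (m : ℕ) (x : q), (h ^ m) x = (e.symm ((ψ ^ m) (x : U))).2 := by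
    intro m
    induction m with
    | zero => intro x; simp [e]
    | succ m ih =>
      intro x
      have hx : (h ^ (m + 1)) x = h ((h ^ m) x) := by
        rw [pow_succ', Module.End.mul_apply]
      rw [hx, ih]
      set y : U := (ψ ^ m) (x : U) with hy
      have hψy : ψ y = ψ ((e.symm y).1 : U) + ψ ((e.symm y).2 : U) := by
        conv_lhs =>
          rw [show y = ((e.symm y).1 : U) + ((e.symm y).2 : U) by
            conv_lhs => rw [← e.apply_symm_apply y]
            exact Submodule.coe_prodEquivOfIsCompl' p q hq _]
        exact map_add ψ _ _
      have hmem : ψ ((e.symm y).1 : U) ∈ p := hinv _ (e.symm y).1.2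
      have hzero : (e.symm (ψ ((e.symm y).1 : U))).2 = 0 :=
        (Submodule.prodEquivOfIsCompl_symm_apply_snd_eq_zero p q hq).2 hmem
      have hstep : h ((e.symm y).2) = (e.symm (ψ ((e.symm y).2 : U))).2 := rfl
      rw [hstep]
      have hadd : (e.symm (ψ y)).2 = (e.symm (ψ ((e.symm y).1 : U))).2
          + (e.symm (ψ ((e.symm y).2 : U))).2 := by
        rw [hψy, map_add]; rfl
      rw [pow_succ', Module.End.mul_apply, ← hy, hadd, hzero, zero_add]
  have hnil : IsNilpotent h := by
    refine ⟨n, ?_⟩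
    ext x
    rw [LinearMap.zero_apply, key n x]
    have hmem : (ψ ^ n) (x : U) ∈ p := hr ⟨(x : U), rfl⟩
    exact congrArg _ ((Submodule.prodEquivOfIsCompl_symm_apply_snd_eq_zero p q hq).2 hmem)
  let bp := Module.finBasis K p
  let bq := Module.finBasis K q
  let b := bp.prod bq
  have hbl : ∀ j, b (Sum.inl j) = (bp j, 0) := fun j =>
    Prod.ext (Module.Basis.prod_apply_inl_fst _ _ _) (Module.Basis.prod_apply_inl_snd _ _ _)
  have hbr : ∀ j, b (Sum.inr j) = (0, bq j) := fun j =>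
    Prod.ext (Module.Basis.prod_apply_inr_fst _ _ _) (Module.Basis.prod_apply_inr_snd _ _ _)
  have hgl : ∀ j, g (bp j, 0) = e.symm ((1 + ψ) ((bp j : U))) := by
    intro j
    simp only [hg, LinearMap.comp_apply, LinearEquiv.coe_coe]
    congr 1
    have : e (bp j, 0) = ((bp j : U)) + ((0 : q) : U) :=
      Submodule.coe_prodEquivOfIsCompl' p q hq _
    rw [this]; simp
  have hgr : ∀ j, g (0, bq j) = e.symm ((1 + ψ) ((bq j : U))) := by
    intro j
    simp only [hg, LinearMap.comp_apply, LinearEquiv.coe_coe]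
    congr 1
    have : e (0, bq j) = (((0 : p) : U)) + ((bq j : U)) :=
      Submodule.coe_prodEquivOfIsCompl' p q hq _
    rw [this]; simp
  have h11 : (LinearMap.toMatrix b b g).toBlocks₁₁
      = LinearMap.toMatrix bp bp ((1 + ψ).restrict hp) := by
    ext i j
    simp only [Matrix.toBlocks₁₁, Matrix.of_apply, LinearMap.toMatrix_apply]
    rw [hbl j, hgl j, Module.Basis.prod_repr_inl]
    have hz : (1 + ψ) ((bp j : U)) ∈ p := hp _ (bp j).2
    have : e.symm ((1 + ψ) ((bp j : U))) = (⟨(1 + ψ) ((bp j : U)), hz⟩, 0) :=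
      Submodule.prodEquivOfIsCompl_symm_apply_left p q hq (⟨(1 + ψ) ((bp j : U)), hz⟩ : p)
    rw [this]
    rfl
  have h21 : (LinearMap.toMatrix b b g).toBlocks₂₁ = 0 := by
    ext i j
    simp only [Matrix.toBlocks₂₁, Matrix.of_apply, LinearMap.toMatrix_apply, Matrix.zero_apply]
    rw [hbl j, hgl j, Module.Basis.prod_repr_inr]
    have hz : (1 + ψ) ((bp j : U)) ∈ p := hp _ (bp j).2
    rw [(Submodule.prodEquivOfIsCompl_symm_apply_snd_eq_zero p q hq).2 hz]
    simp
  have h22 : (LinearMap.toMatrix b b g).toBlocks₂₂ = LinearMap.toMatrix bq bq (1 + h) := by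
    ext i j
    simp only [Matrix.toBlocks₂₂, Matrix.of_apply, LinearMap.toMatrix_apply]
    rw [hbr j, hgr j, Module.Basis.prod_repr_inr]
    have h1 : (1 + ψ) ((bq j : U)) = ((bq j : U)) + ψ ((bq j : U)) := by
      simp [LinearMap.add_apply]
    have hsnd : (e.symm ((1 + ψ) ((bq j : U)))).2 = (1 + h) (bq j) := by
      rw [h1, map_add]
      have h2 : e.symm ((bq j : U)) = (0, bq j) :=
        Submodule.prodEquivOfIsCompl_symm_apply_right p q hq (bq j)
      have h3 : (e.symm ((bq j : U)) + e.symm (ψ ((bq j : U)))).2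
          = (e.symm ((bq j : U))).2 + (e.symm (ψ ((bq j : U)))).2 := rfl
      rw [h3, h2]
      simp [hh, LinearMap.add_apply]
    rw [hsnd]
  have hdetM : LinearMap.det g =
      LinearMap.det ((1 + ψ).restrict hp) * LinearMap.det (1 + h) := by
    rw [← LinearMap.det_toMatrix b g, ← Matrix.fromBlocks_toBlocks (LinearMap.toMatrix b b g),
      h11, h21, h22, Matrix.det_fromBlocks_zero₂₁, LinearMap.det_toMatrix,
      LinearMap.det_toMatrix]
  rw [← hdet, hdetM, det_one_add_of_isNilpotent h hnil, mul_one]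

lemma det_restrict_mono {k V : Type*} [Field k] [AddCommGroup V] [Module k V]
    (φ : V →ₗ[k] V) (W W' : Submodule k V) (hWW' : W ≤ W')
    (hfin : FiniteDimensional k W')
    (hWinv : ∀ x ∈ W, φ x ∈ W) (hW'inv : ∀ x ∈ W', φ x ∈ W')
    (n : ℕ) (hr : LinearMap.range (φ ^ n) ≤ W)
    (hpW : ∀ x ∈ W, (1 + φ) x ∈ W) (hpW' : ∀ x ∈ W', (1 + φ) x ∈ W') :
    LinearMap.det ((1 + φ).restrict hpW') = LinearMap.det ((1 + φ).restrict hpW) := by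
  classical
  set ψ : W' →ₗ[k] W' := φ.restrict hW'inv with hψ
  set p : Submodule k W' := W.comap W'.subtype with hpdef
  have hcoe : ∀ x : W', ((ψ x : W') : V) = φ (x : V) := fun x => rfl
  have hinv : ∀ x ∈ p, ψ x ∈ p := by
    intro x hx
    show ((ψ x : W') : V) ∈ W
    rw [hcoe]
    exact hWinv _ hx
  have hpow : ∀ (m : ℕ) (x : W'), (((ψ ^ m) x : W') : V) = (φ ^ m) (x : V) := by
    intro m x
    rw [hψ, Module.End.pow_restrict]
    rfl
  have hrp : LinearMap.range (ψ ^ n) ≤ p := by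
    rintro y ⟨x, rfl⟩
    show (((ψ ^ n) x : W') : V) ∈ W
    rw [hpow]
    exact hr ⟨(x : V), rfl⟩
  have hp1 : ∀ x ∈ p, (1 + ψ) x ∈ p := by
    intro x hx
    show (((1 + ψ) x : W') : V) ∈ W
    have : ((1 + ψ) x : W') = x + ψ x := rfl
    rw [this]
    push_cast
    exact W.add_mem hx (hinv x hx)
  have hmain := det_one_add_eq_det_restrict ψ p hinv n hrp hp1
  have hL : (1 + ψ) = (1 + φ).restrict hpW' := by
    ext x
    rfl
  let e : p ≃ₗ[k] W := Submodule.comapSubtypeEquivOfLe hWW'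
  have hconj : (1 + φ).restrict hpW
      = (e.toLinearMap.comp ((1 + ψ).restrict hp1)).comp e.symm.toLinearMap := by
    ext x
    rfl
  have hL' : LinearMap.det (1 + ψ) = LinearMap.det ((1 + φ).restrict hpW') := by rw [hL]
  exact hL'.symm.trans <| hmain.trans (by rw [hconj, LinearMap.comp_assoc]; exact (LinearMap.det_conj _ e).symm)



/-- An endomorphism `φ` of a `k`-vector space `V` is *finite potent* if `φ^n(V)` is
finite-dimensional for some `n ≥ 1`. -/
def IsFinitePotent {k V : Type*} [Field k] [AddCommGroup V] [Module k V]
    (φ : V →ₗ[k] V) : Prop :=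
  ∃ n : ℕ, 1 ≤ n ∧ FiniteDimensional k (LinearMap.range (φ ^ n))

/-- the determinant `det((1+φ)|_W)` is independent of the choice of
admissible subspace `W` for a finite potent endomorphism `φ`. -/
theorem det_one_add_restrict_eq_of_admissible
    {k V : Type*} [Field k] [AddCommGroup V] [Module k V]
    (φ : V →ₗ[k] V) (hφ : IsFinitePotent φ)
    (W₁ W₂ : Submodule k V)
    (hW₁fin : FiniteDimensional k W₁) (hW₂fin : FiniteDimensional k W₂)
    (hW₁inv : ∀ x ∈ W₁, φ x ∈ W₁) (hW₂inv : ∀ x ∈ W₂, φ x ∈ W₂)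
    (n₁ n₂ : ℕ) (hn₁ : 1 ≤ n₁) (hn₂ : 1 ≤ n₂)
    (hr₁ : LinearMap.range (φ ^ n₁) ≤ W₁) (hr₂ : LinearMap.range (φ ^ n₂) ≤ W₂) :
    LinearMap.det ((1 + φ).restrict
        (fun x hx => W₁.add_mem hx (hW₁inv x hx) : ∀ x ∈ W₁, (1 + φ) x ∈ W₁))
      = LinearMap.det ((1 + φ).restrict
        (fun x hx => W₂.add_mem hx (hW₂inv x hx) : ∀ x ∈ W₂, (1 + φ) x ∈ W₂)) := by
  set W₃ := W₁ ⊔ W₂ with hW₃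
  have hfin₃ : FiniteDimensional k W₃ := Submodule.finiteDimensional_sup W₁ W₂
  have hinv₃ : ∀ x ∈ W₃, φ x ∈ W₃ := by
    intro x hx
    have h1 : Submodule.map φ W₃ ≤ W₃ := by
      rw [hW₃, Submodule.map_sup]
      exact sup_le ((Submodule.map_le_iff_le_comap.mpr hW₁inv).trans le_sup_left)
        ((Submodule.map_le_iff_le_comap.mpr hW₂inv).trans le_sup_right)
    exact h1 ⟨x, hx, rfl⟩
  have hp₃ : ∀ x ∈ W₃, (1 + φ) x ∈ W₃ := fun x hx => W₃.add_mem hx (hinv₃ x hx)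
  have h1 := det_restrict_mono φ W₁ W₃ le_sup_left hfin₃ hW₁inv hinv₃ n₁ hr₁
    (fun x hx => W₁.add_mem hx (hW₁inv x hx)) hp₃
  have h2 := det_restrict_mono φ W₂ W₃ le_sup_right hfin₃ hW₂inv hinv₃ n₂ hr₂
    (fun x hx => W₂.add_mem hx (hW₂inv x hx)) hp₃
  rw [← h1, ← h2]
end

section
/- Let φ be a finite potent endomorphism of a k-vector space V and let V = V₁ ⊕ V₂ be a direct sum decomposition with φ(Vᵢ) ⊆ Vᵢ for i = 1,2. Let W₁ ⊆ V₁ and W₂ ⊆ V₂ be finite-dimensional subspaces with φ(Wᵢ) ⊆ Wᵢ and φ^{nᵢ}(Vᵢ) ⊆ Wᵢ for some nᵢ ≥ 1. Then W₁ + W₂ is an admissible subspace for φ on V and det((1+φ)|_{W₁+W₂}) = det((1+φ)|_{W₁}) · det((1+φ)|_{W₂}); that is, Det^k_V(1+φ) = Det^k_{V₁}(1+φ|_{V₁}) · Det^k_{V₂}(1+φ|_{V₂}). -/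
lemma my_det_prodMap {k M₁ M₂ : Type*} [Field k] [AddCommGroup M₁] [Module k M₁]
    [AddCommGroup M₂] [Module k M₂] [FiniteDimensional k M₁] [FiniteDimensional k M₂]
    (f : M₁ →ₗ[k] M₁) (g : M₂ →ₗ[k] M₂) :
    LinearMap.det (f.prodMap g) = LinearMap.det f * LinearMap.det g := by
  classical
  let b₁ := Module.finBasis k M₁
  let b₂ := Module.finBasis k M₂
  rw [← LinearMap.det_toMatrix (b₁.prod b₂), LinearMap.toMatrix_prodMap b₁ b₂ f g,
    Matrix.det_fromBlocks_zero₂₁, LinearMap.det_toMatrix, LinearMap.det_toMatrix]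

/-- multiplicativity of the infinite determinant with respect to an
invariant direct sum decomposition `V = V₁ ⊕ V₂`:
`W₁ + W₂` is an admissible subspace for `φ` on `V` and
`Det^k_V(1+φ) = Det^k_{V₁}(1+φ|_{V₁}) · Det^k_{V₂}(1+φ|_{V₂})`. -/
theorem det_one_add_of_invariant_direct_sum
    {k V : Type*} [Field k] [AddCommGroup V] [Module k V]
    (φ : V →ₗ[k] V)
    (V₁ V₂ : Submodule k V) (hdisj : V₁ ⊓ V₂ = ⊥) (hsum : V₁ ⊔ V₂ = ⊤)
    (hV₁inv : ∀ x ∈ V₁, φ x ∈ V₁) (hV₂inv : ∀ x ∈ V₂, φ x ∈ V₂)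
    (W₁ W₂ : Submodule k V) (hW₁le : W₁ ≤ V₁) (hW₂le : W₂ ≤ V₂)
    (hW₁fin : FiniteDimensional k W₁) (hW₂fin : FiniteDimensional k W₂)
    (hW₁inv : ∀ x ∈ W₁, φ x ∈ W₁) (hW₂inv : ∀ x ∈ W₂, φ x ∈ W₂)
    (n₁ n₂ : ℕ) (hn₁ : 1 ≤ n₁) (hn₂ : 1 ≤ n₂)
    (hr₁ : Submodule.map (φ ^ n₁) V₁ ≤ W₁) (hr₂ : Submodule.map (φ ^ n₂) V₂ ≤ W₂) :
    FiniteDimensional k ↥(W₁ ⊔ W₂) ∧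
    ∃ hinv : ∀ x ∈ W₁ ⊔ W₂, φ x ∈ W₁ ⊔ W₂,
      (∃ n : ℕ, 1 ≤ n ∧ LinearMap.range (φ ^ n) ≤ W₁ ⊔ W₂) ∧
      LinearMap.det ((1 + φ).restrict
          (fun x hx => (W₁ ⊔ W₂).add_mem hx (hinv x hx) :
            ∀ x ∈ W₁ ⊔ W₂, (1 + φ) x ∈ W₁ ⊔ W₂))
        = LinearMap.det ((1 + φ).restrict
            (fun x hx => W₁.add_mem hx (hW₁inv x hx) : ∀ x ∈ W₁, (1 + φ) x ∈ W₁))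
          * LinearMap.det ((1 + φ).restrict
            (fun x hx => W₂.add_mem hx (hW₂inv x hx) : ∀ x ∈ W₂, (1 + φ) x ∈ W₂)) := by
  haveI := hW₁fin; haveI := hW₂fin
  haveI : FiniteDimensional k ↥(W₁ ⊔ W₂) := Submodule.finiteDimensional_sup W₁ W₂
  have hinv : ∀ x ∈ W₁ ⊔ W₂, φ x ∈ W₁ ⊔ W₂ := by
    intro x hx
    rcases Submodule.mem_sup.mp hx with ⟨a, ha, b, hb, rfl⟩
    rw [map_add]
    exact Submodule.add_mem_sup (hW₁inv a ha) (hW₂inv b hb)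
  have hrange : ∃ n : ℕ, 1 ≤ n ∧ LinearMap.range (φ ^ n) ≤ W₁ ⊔ W₂ := by
    have hpow₁ : ∀ m, ∀ x ∈ V₁, (φ ^ m) x ∈ V₁ := by
      intro m
      induction m with
      | zero => intro x hx; simpa using hx
      | succ n ih =>
        intro x hx
        rw [pow_succ, Module.End.mul_apply]
        exact ih _ (hV₁inv x hx)
    have hpow₂ : ∀ m, ∀ x ∈ V₂, (φ ^ m) x ∈ V₂ := by
      intro m
      induction m with
      | zero => intro x hx; simpa using hx
      | succ n ih =>
        intro x hx
        rw [pow_succ, Module.End.mul_apply]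
        exact ih _ (hV₂inv x hx)
    refine ⟨n₁ + n₂, le_trans hn₁ (Nat.le_add_right _ _), ?_⟩
    rintro y ⟨v, rfl⟩
    have hv : v ∈ V₁ ⊔ V₂ := hsum ▸ Submodule.mem_top
    rcases Submodule.mem_sup.mp hv with ⟨a, ha, b, hb, rfl⟩
    rw [map_add]
    refine Submodule.add_mem_sup ?_ ?_
    · have h : (φ ^ (n₁ + n₂)) a = (φ ^ n₁) ((φ ^ n₂) a) := by
        rw [pow_add, Module.End.mul_apply]
      rw [h]
      exact hr₁ ⟨(φ ^ n₂) a, hpow₁ n₂ a ha, rfl⟩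
    · have h : (φ ^ (n₁ + n₂)) b = (φ ^ n₂) ((φ ^ n₁) b) := by
        rw [add_comm, pow_add, Module.End.mul_apply]
      rw [h]
      exact hr₂ ⟨(φ ^ n₁) b, hpow₂ n₁ b hb, rfl⟩
  refine ⟨inferInstance, hinv, hrange, ?_⟩
  have hWdisj : Disjoint W₁ W₂ := by
    rw [disjoint_iff]
    exact le_bot_iff.mp (hdisj ▸ inf_le_inf hW₁le hW₂le)
  set f₁ := (1 + φ).restrict
    (fun x hx => W₁.add_mem hx (hW₁inv x hx) : ∀ x ∈ W₁, (1 + φ) x ∈ W₁) with hf₁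
  set f₂ := (1 + φ).restrict
    (fun x hx => W₂.add_mem hx (hW₂inv x hx) : ∀ x ∈ W₂, (1 + φ) x ∈ W₂) with hf₂
  set F := (1 + φ).restrict
    (fun x hx => (W₁ ⊔ W₂).add_mem hx (hinv x hx) :
      ∀ x ∈ W₁ ⊔ W₂, (1 + φ) x ∈ W₁ ⊔ W₂) with hF
  let g : (W₁ × W₂) →ₗ[k] ↥(W₁ ⊔ W₂) :=
    (Submodule.inclusion (le_sup_left : W₁ ≤ W₁ ⊔ W₂)).comp (LinearMap.fst k W₁ W₂)
      + (Submodule.inclusion (le_sup_right : W₂ ≤ W₁ ⊔ W₂)).comp (LinearMap.snd k W₁ W₂)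
  have hg_coe : ∀ p : W₁ × W₂, (g p : V) = (p.1 : V) + (p.2 : V) := fun p => rfl
  have hg_bij : Function.Bijective g := by
    constructor
    · rw [injective_iff_map_eq_zero]
      rintro ⟨x, y⟩ hxy
      have h0 : (x : V) + (y : V) = 0 := by
        have h := congrArg Subtype.val hxy
        simpa [hg_coe] using h
      have hx0 : (x : V) ∈ W₁ ⊓ W₂ :=
        ⟨x.2, by rw [eq_neg_of_add_eq_zero_left h0]; exact W₂.neg_mem y.2⟩
      have hxz : (x : V) = 0 := by
        have h := hWdisj.le_bot hx0
        simpa using h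
      have hyz : (y : V) = 0 := by rw [hxz, zero_add] at h0; exact h0
      exact Prod.ext (Subtype.ext hxz) (Subtype.ext hyz)
    · rintro ⟨z, hz⟩
      rcases Submodule.mem_sup.mp hz with ⟨a, ha, b, hb, rfl⟩
      exact ⟨(⟨a, ha⟩, ⟨b, hb⟩), Subtype.ext (hg_coe _)⟩
  let e : (W₁ × W₂) ≃ₗ[k] ↥(W₁ ⊔ W₂) := LinearEquiv.ofBijective g hg_bij
  have he : ∀ q : W₁ × W₂, (e q : V) = (q.1 : V) + (q.2 : V) := fun q => rfl
  have hFconj : F = (e : (W₁ × W₂) →ₗ[k] ↥(W₁ ⊔ W₂)) ∘ₗ (f₁.prodMap f₂)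
      ∘ₗ (e.symm : ↥(W₁ ⊔ W₂) →ₗ[k] (W₁ × W₂)) := by
    apply LinearMap.ext
    intro u
    obtain ⟨p, rfl⟩ := e.surjective u
    simp only [LinearMap.comp_apply, LinearEquiv.coe_coe, LinearEquiv.symm_apply_apply]
    apply Subtype.ext
    rw [hF, LinearMap.restrict_coe_apply, he p, he]
    show (1 + φ) ((p.1 : V) + (p.2 : V)) = ((f₁ p.1 : V)) + ((f₂ p.2 : V))
    rw [map_add, hf₁, hf₂, LinearMap.restrict_coe_apply, LinearMap.restrict_coe_apply]
  rw [hFconj, LinearMap.det_conj, my_det_prodMap]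
end

section
/- Let F ⊆ End_k(V) be a finite potent subspace and let φ, ψ ∈ F. Then the endomorphisms φ+ψ+φ∘ψ = (1+φ)(1+ψ)−1 and ψ+φ+ψ∘φ = (1+ψ)(1+φ)−1 are finite potent, and Det^k_V(1+φ) · Det^k_V(1+ψ) = Det^k_V((1+φ)(1+ψ)) = Det^k_V((1+ψ)(1+φ)); explicitly, for any admissible subspaces W_φ for φ, W_ψ for ψ, W for φ+ψ+φ∘ψ, and W' for ψ+φ+ψ∘φ, one has det((1+φ)|_{W_φ}) · det((1+ψ)|_{W_ψ}) = det((1+φ+ψ+φ∘ψ)|_W) = det((1+ψ+φ+ψ∘φ)|_{W'}). -/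
/-- A subspace `F ⊆ End_k(V)` is a *finite potent subspace* if there is `n ≥ 1` such that
any composition of `n` elements of `F` has finite-dimensional image. -/
def IsFinitePotentSubspace {k V : Type*} [Field k] [AddCommGroup V] [Module k V]
    (F : Submodule k (V →ₗ[k] V)) : Prop :=
  ∃ n : ℕ, 1 ≤ n ∧ ∀ f : Fin n → (V →ₗ[k] V), (∀ i, f i ∈ F) →
    FiniteDimensional k (LinearMap.range (List.ofFn f).prod)

open Polynomial Module LinearMap

section Aux

variable {K M : Type*} [Field K] [AddCommGroup M] [Module K M]

/-- determinant of `1 + nilpotent` is `1`. -/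
lemma aux_det_one_add_of_isNilpotent [FiniteDimensional K M] {g : M →ₗ[K] M}
    (h : IsNilpotent g) : LinearMap.det (1 + g) = 1 := by
  classical
  let b := Module.finBasis K M
  set A := LinearMap.toMatrix b b g with hA
  have hc : A.charpoly = X ^ (finrank K M) := by
    rw [LinearMap.charpoly_toMatrix, IsNilpotent.charpoly_eq_X_pow_finrank h]
  have heval := congrArg (Polynomial.eval (-1 : K)) hc
  rw [Matrix.charpoly, _root_.eval_det, Matrix.matPolyEquiv_charmatrix] at heval
  have h1 : Polynomial.eval (Matrix.scalar (Fin (finrank K M)) (-1 : K))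
      (X - C A) = -(1 + A) := by
    simp only [eval_sub, eval_X, eval_C, map_neg, map_one]
    abel
  rw [h1, Matrix.det_neg, Fintype.card_fin] at heval
  simp only [eval_pow, eval_X] at heval
  have h2 : LinearMap.det (1 + g) = Matrix.det (1 + A) := by
    rw [← LinearMap.det_toMatrix b, map_add, LinearMap.toMatrix_one, hA]
  rw [h2]
  exact mul_left_cancel₀ (pow_ne_zero _ (neg_ne_zero.mpr (one_ne_zero))) (by
    rw [heval, mul_one])

lemma aux_det_prodMap {P Q : Type*} [AddCommGroup P] [Module K P] [AddCommGroup Q]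
    [Module K Q] [FiniteDimensional K P] [FiniteDimensional K Q]
    (A : P →ₗ[K] P) (D : Q →ₗ[K] Q) :
    LinearMap.det (A.prodMap D) = LinearMap.det A * LinearMap.det D := by
  classical
  let bP := Module.finBasis K P
  let bQ := Module.finBasis K Q
  rw [← LinearMap.det_toMatrix (bP.prod bQ), LinearMap.toMatrix_prodMap,
    Matrix.det_fromBlocks_zero₂₁, LinearMap.det_toMatrix, LinearMap.det_toMatrix]

/-- Core lemma: if `g` preserves `P` and some power of `g` maps everything into `P`,
then the determinant of `1 + g` equals that of its restriction to `P`. -/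
lemma aux_det_one_add_eq_restrict [FiniteDimensional K M] (g : M →ₗ[K] M)
    (P : Submodule K M) (hP : ∀ x ∈ P, g x ∈ P) (m : ℕ) (hm : ∀ x : M, (g ^ m) x ∈ P) :
    LinearMap.det (1 + g) =
      LinearMap.det ((1 + g).restrict
        (fun x hx => P.add_mem hx (hP x hx) : ∀ x ∈ P, (1 + g) x ∈ P)) := by
  classical
  obtain ⟨Q, hc⟩ := P.exists_isCompl
  set prP := P.linearProjOfIsCompl Q hc with hprP
  set prQ := Q.linearProjOfIsCompl P hc.symm with hprQ
  have hPpow : ∀ j : ℕ, ∀ x ∈ P, (g ^ j) x ∈ P := by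
    intro j
    induction j with
    | zero => intro x hx; simpa using hx
    | succ j ih =>
      intro x hx
      rw [pow_succ]
      exact ih _ (hP x hx)
  set Ng : Q →ₗ[K] Q := prQ ∘ₗ g ∘ₗ Q.subtype with hNg
  have key : ∀ j : ℕ, Ng ^ (j + 1) = prQ ∘ₗ (g ^ (j + 1)) ∘ₗ Q.subtype := by
    intro j
    induction j with
    | zero => simp [hNg]
    | succ j ih =>
      apply LinearMap.ext
      intro x
      have hcoe : ((Ng x : M)) = g ↑x - (prP (g ↑x) : M) := by
        have hsplit := Submodule.projection_add_projection_eq_self hc (g (x : M))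
        have : ((Ng x : M)) = (prQ (g ↑x) : M) := rfl
        rw [this]
        exact eq_sub_of_add_eq' hsplit
      have h1 : (Ng ^ (j + 1 + 1)) x = (Ng ^ (j + 1)) (Ng x) := by
        rw [pow_succ, Module.End.mul_apply]
      rw [h1, ih]
      simp only [LinearMap.comp_apply, Submodule.subtype_apply]
      rw [hcoe, map_sub, map_sub]
      have hz : prQ ((g ^ (j + 1)) ((prP (g ↑x) : M))) = 0 :=
        Submodule.projectionOnto_apply_of_mem_right hc.symm
          (hPpow (j + 1) _ (prP (g ↑x)).2)
      rw [hz, sub_zero]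
      show prQ ((g ^ (j + 1)) (g ↑x)) = prQ ((g ^ (j + 1 + 1)) ↑x)
      rw [pow_succ g (j+1), Module.End.mul_apply]
  have hNgnil : IsNilpotent Ng := by
    refine ⟨m + 1, ?_⟩
    apply LinearMap.ext
    intro x
    rw [key m]
    simp only [LinearMap.comp_apply, Submodule.subtype_apply, LinearMap.zero_apply]
    have hmem : (g ^ (m + 1)) (x : M) ∈ P := by
      rw [pow_succ']
      exact hP _ (hm _)
    exact Submodule.projectionOnto_apply_of_mem_right hc.symm hmem
  set D : ↥Q →ₗ[K] ↥Q := 1 + Ng with hD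
  have hDapp : ∀ x : Q, D x = prQ ((1 + g) (x : M)) := by
    intro x
    simp only [hD, LinearMap.add_apply, Module.End.one_apply, LinearMap.comp_apply,
      Submodule.subtype_apply, hNg, map_add]
    rw [show prQ ↑x = x from Submodule.projectionOnto_apply_left hc.symm x]
  have hDunit : IsUnit D := by
    rw [hD]
    exact hNgnil.isUnit_one_add
  set u := hDunit.unit with hu
  set A : ↥P →ₗ[K] ↥P := (1 + g).restrict
      (fun x hx => P.add_mem hx (hP x hx) : ∀ x ∈ P, (1 + g) x ∈ P) with hA
  set B : ↥Q →ₗ[K] ↥P := prP ∘ₗ (1 + g) ∘ₗ Q.subtype ∘ₗ (↑u⁻¹ : ↥Q →ₗ[K] ↥Q) with hB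
  have hBD : ∀ x : Q, B (D x) = prP ((1 + g) (x : M)) := by
    intro x
    have h1 : (↑u⁻¹ : ↥Q →ₗ[K] ↥Q) (D x) = ((↑u⁻¹ * ↑u : ↥Q →ₗ[K] ↥Q)) x := by
      rw [Module.End.mul_apply, hDunit.unit_spec]
    have h2 : (↑u⁻¹ : ↥Q →ₗ[K] ↥Q) (D x) = x := by
      rw [h1, u.inv_mul, Module.End.one_apply]
    simp only [hB, LinearMap.comp_apply, Submodule.subtype_apply, h2]
  set nn : (↥P × ↥Q) →ₗ[K] (↥P × ↥Q) :=
      (LinearMap.inl K ↥P ↥Q) ∘ₗ B ∘ₗ (LinearMap.snd K ↥P ↥Q) with hnn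
  have hnnil : IsNilpotent nn := by
    refine ⟨2, ?_⟩
    apply LinearMap.ext
    rintro ⟨p, q⟩
    simp [hnn, pow_succ, Module.End.mul_apply]
  set e : (↥P × ↥Q) ≃ₗ[K] M := Submodule.prodEquivOfIsCompl P Q hc with he
  have hsymm : ∀ y : M, e.symm y = (prP y, prQ y) := by
    intro y
    rw [LinearEquiv.symm_apply_eq]
    have : e (prP y, prQ y) = ((prP y : M)) + ((prQ y : M)) :=
      Submodule.coe_prodEquivOfIsCompl' P Q hc _
    rw [this]
    exact (Submodule.projection_add_projection_eq_self hc y).symm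
  have hfact : ((e.symm : M →ₗ[K] ↥P × ↥Q) ∘ₗ ((1 + g) ∘ₗ (e : ↥P × ↥Q →ₗ[K] M)))
      = (1 + nn) ∘ₗ (A.prodMap D) := by
    apply LinearMap.ext
    rintro ⟨p, q⟩
    have heapp : e (p, q) = (p : M) + (q : M) := Submodule.coe_prodEquivOfIsCompl' P Q hc _
    simp only [LinearMap.comp_apply, LinearEquiv.coe_coe, heapp]
    rw [map_add (1 + g), hsymm]
    have hP1 : prP ((1 + g) (p : M) + (1 + g) (q : M)) = A p + B (D q) := by
      rw [map_add]
      congr 1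
      · have hc1 : ((A p : M)) = (1 + g) (p : M) := rfl
        rw [← hc1, show prP (A p : M) = A p from Submodule.projectionOnto_apply_left hc (A p)]
      · exact (hBD q).symm
    have hQ1 : prQ ((1 + g) (p : M) + (1 + g) (q : M)) = D q := by
      rw [map_add]
      have hz : prQ ((1 + g) (p : M)) = 0 :=
        Submodule.projectionOnto_apply_of_mem_right hc.symm
          (P.add_mem p.2 (hP _ p.2))
      rw [hz, zero_add, hDapp]
    rw [hP1, hQ1]
    show (A p + B (D q), D q) = ((1 + nn) ((A.prodMap D) (p, q)))
    simp only [LinearMap.prodMap_apply, LinearMap.add_apply, Module.End.one_apply,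
      hnn, LinearMap.comp_apply, LinearMap.snd_apply, LinearMap.inl_apply, Prod.mk_add_mk]
    simp
  have hdet1 : LinearMap.det (1 + g) = LinearMap.det ((1 + nn) ∘ₗ (A.prodMap D)) := by
    have hconj := LinearMap.det_conj (1 + g) e.symm
    rw [LinearEquiv.symm_symm] at hconj
    rw [← hconj, hfact]
  rw [hdet1, LinearMap.det_comp, aux_det_prodMap,
    aux_det_one_add_of_isNilpotent hnnil, aux_det_one_add_of_isNilpotent hNgnil, one_mul,
    mul_one]

lemma aux_det_restrict_eq_of_le (f : M →ₗ[K] M) (W₁ W₂ : Submodule K M) (h12 : W₁ ≤ W₂)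
    [FiniteDimensional K W₁] [FiniteDimensional K W₂]
    (h1 : ∀ x ∈ W₁, f x ∈ W₁) (h2 : ∀ x ∈ W₂, f x ∈ W₂)
    (m : ℕ) (hm : ∀ x : M, (f ^ m) x ∈ W₁) :
    LinearMap.det ((1 + f).restrict
        (fun x hx => W₂.add_mem hx (h2 x hx) : ∀ x ∈ W₂, (1 + f) x ∈ W₂)) =
    LinearMap.det ((1 + f).restrict
        (fun x hx => W₁.add_mem hx (h1 x hx) : ∀ x ∈ W₁, (1 + f) x ∈ W₁)) := by
  set g := f.restrict h2 with hg
  have hone : (1 + f).restrict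
      (fun x hx => W₂.add_mem hx (h2 x hx) : ∀ x ∈ W₂, (1 + f) x ∈ W₂) = 1 + g := by
    apply LinearMap.ext; intro x; apply Subtype.ext
    simp [hg, LinearMap.restrict_apply]
  set P : Submodule K ↥W₂ := W₁.comap W₂.subtype with hPdef
  have hP : ∀ x ∈ P, g x ∈ P := by
    intro x hx
    show (g x : M) ∈ W₁
    have hx' : (g x : M) = f ↑x := rfl
    rw [hx']; exact h1 _ hx
  have hm' : ∀ x : ↥W₂, (g ^ m) x ∈ P := by
    intro x
    show ((g ^ m) x : M) ∈ W₁
    have hx' : ((g ^ m) x : M) = (f ^ m) (x : M) := by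
      rw [hg, Module.End.pow_restrict]
      rfl
    rw [hx']; exact hm _
  rw [hone, aux_det_one_add_eq_restrict g P hP m hm']
  set eP : ↥P ≃ₗ[K] ↥W₁ := Submodule.comapSubtypeEquivOfLe h12 with heP
  have hconj := LinearMap.det_conj ((1 + g).restrict
      (fun x hx => P.add_mem hx (hP x hx) : ∀ x ∈ P, (1 + g) x ∈ P)) eP
  rw [← hconj]
  congr 1

end Aux

/-- for `φ, ψ` in a finite potent subspace `F ⊆ End_k(V)`, the endomorphisms
`(1+φ)(1+ψ) - 1 = φ+ψ+φψ` and `(1+ψ)(1+φ) - 1 = ψ+φ+ψφ` are finite potent and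
`Det^k_V(1+φ) · Det^k_V(1+ψ) = Det^k_V((1+φ)(1+ψ)) = Det^k_V((1+ψ)(1+φ))`,
computed via any admissible subspaces. -/
theorem det_one_add_mul_of_finitePotentSubspace
    {k V : Type*} [Field k] [AddCommGroup V] [Module k V]
    (F : Submodule k (V →ₗ[k] V)) (hF : IsFinitePotentSubspace F)
    (φ ψ : V →ₗ[k] V) (hφ : φ ∈ F) (hψ : ψ ∈ F)
    (Wφ Wψ W W' : Submodule k V)
    (hWφfin : FiniteDimensional k Wφ) (hWψfin : FiniteDimensional k Wψ)
    (hWfin : FiniteDimensional k W) (hW'fin : FiniteDimensional k W')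
    (hWφinv : ∀ x ∈ Wφ, φ x ∈ Wφ) (hWψinv : ∀ x ∈ Wψ, ψ x ∈ Wψ)
    (hWinv : ∀ x ∈ W, (φ + ψ + φ * ψ) x ∈ W)
    (hW'inv : ∀ x ∈ W', (ψ + φ + ψ * φ) x ∈ W')
    (nφ nψ n n' : ℕ) (hnφ : 1 ≤ nφ) (hnψ : 1 ≤ nψ) (hn : 1 ≤ n) (hn' : 1 ≤ n')
    (hrφ : LinearMap.range (φ ^ nφ) ≤ Wφ) (hrψ : LinearMap.range (ψ ^ nψ) ≤ Wψ)
    (hr : LinearMap.range ((φ + ψ + φ * ψ) ^ n) ≤ W)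
    (hr' : LinearMap.range ((ψ + φ + ψ * φ) ^ n') ≤ W') :
    IsFinitePotent (φ + ψ + φ * ψ) ∧ IsFinitePotent (ψ + φ + ψ * φ) ∧
    LinearMap.det ((1 + φ).restrict
        (fun x hx => Wφ.add_mem hx (hWφinv x hx) : ∀ x ∈ Wφ, (1 + φ) x ∈ Wφ))
      * LinearMap.det ((1 + ψ).restrict
        (fun x hx => Wψ.add_mem hx (hWψinv x hx) : ∀ x ∈ Wψ, (1 + ψ) x ∈ Wψ))
      = LinearMap.det ((1 + (φ + ψ + φ * ψ)).restrict
          (fun x hx => W.add_mem hx (hWinv x hx) :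
            ∀ x ∈ W, (1 + (φ + ψ + φ * ψ)) x ∈ W)) ∧
    LinearMap.det ((1 + (φ + ψ + φ * ψ)).restrict
        (fun x hx => W.add_mem hx (hWinv x hx) :
          ∀ x ∈ W, (1 + (φ + ψ + φ * ψ)) x ∈ W))
      = LinearMap.det ((1 + (ψ + φ + ψ * φ)).restrict
          (fun x hx => W'.add_mem hx (hW'inv x hx) :
            ∀ x ∈ W', (1 + (ψ + φ + ψ * φ)) x ∈ W')) := by
  classical
  haveI := hWφfin; haveI := hWψfin; haveI := hWfin; haveI := hW'fin
  obtain ⟨N, hN1, hNF⟩ := hF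
  set gg : Fin 2 → (V →ₗ[k] V) := ![φ, ψ] with hgg
  have hgg0 : gg 0 = φ := rfl
  have hgg1 : gg 1 = ψ := rfl
  have hggF : ∀ i, gg i ∈ F := by
    intro i; fin_cases i
    · exact hφ
    · exact hψ
  set word : List (Fin 2) → (V →ₗ[k] V) := fun l => (l.map gg).prod with hword
  have word_append : ∀ l₁ l₂, word (l₁ ++ l₂) = word l₁ * word l₂ := by
    intro l₁ l₂; simp [hword]
  have word_cons : ∀ (a : Fin 2) (l), word (a :: l) = gg a * word l := by
    intro a l; simp [hword]
  have word_fin : ∀ l : List (Fin 2), l.length = N →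
      FiniteDimensional k (LinearMap.range (word l)) := by
    intro l hl
    have h1 : List.ofFn (fun i : Fin N => gg (l.get (Fin.cast hl.symm i))) = l.map gg := by
      apply List.ext_getElem
      · simp [hl]
      · intro i h₁ h₂
        simp
    have h2 := hNF (fun i : Fin N => gg (l.get (Fin.cast hl.symm i))) (fun i => hggF _)
    rw [h1] at h2
    exact h2
  set R : Submodule k V := ⨆ v : List.Vector (Fin 2) N, LinearMap.range (word v.1) with hR
  haveI hRfin : FiniteDimensional k R := by
    haveI : ∀ v : List.Vector (Fin 2) N, FiniteDimensional k (LinearMap.range (word v.1)) :=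
      fun v => word_fin v.1 v.2
    infer_instance
  have hlR : ∀ l : List (Fin 2), l.length = N → LinearMap.range (word l) ≤ R := by
    intro l hl
    exact le_iSup (fun v : List.Vector (Fin 2) N => LinearMap.range (word v.1)) ⟨l, hl⟩
  set U : Submodule k V := ⨆ j : Fin N, ⨆ v : List.Vector (Fin 2) (j : ℕ),
      Submodule.map (word v.1) R with hU
  haveI hUfin : FiniteDimensional k U := by
    haveI : ∀ (j : Fin N) (v : List.Vector (Fin 2) (j : ℕ)),
        FiniteDimensional k (Submodule.map (word v.1) R) := fun j v => inferInstance
    infer_instance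
  have hRU : R ≤ U := by
    have h0 : Submodule.map (word ([] : List (Fin 2))) R = R := by
      have hw1 : word ([] : List (Fin 2)) = 1 := by simp [hword]
      rw [hw1, Module.End.one_eq_id, Submodule.map_id]
    have hN0 : (0 : ℕ) < N := hN1
    calc R = Submodule.map (word ([] : List (Fin 2))) R := h0.symm
      _ ≤ ⨆ v : List.Vector (Fin 2) (((⟨0, hN0⟩ : Fin N)) : ℕ),
            Submodule.map (word v.1) R :=
          le_iSup (fun v : List.Vector (Fin 2) (((⟨0, hN0⟩ : Fin N)) : ℕ) =>
            Submodule.map (word v.1) R) ⟨[], rfl⟩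
      _ ≤ U :=
          le_iSup (fun j : Fin N => ⨆ v : List.Vector (Fin 2) (j : ℕ),
            Submodule.map (word v.1) R) ⟨0, hN0⟩
  have hUinv : ∀ a : Fin 2, ∀ x ∈ U, gg a x ∈ U := by
    intro a
    have hmap : Submodule.map (gg a) U ≤ U := by
      rw [hU, Submodule.map_iSup]
      apply iSup_le; intro j
      rw [Submodule.map_iSup]
      apply iSup_le; intro v
      rw [← Submodule.map_comp, ← Module.End.mul_eq_comp, ← word_cons a v.1]
      by_cases hj : (j : ℕ) + 1 < N
      · calc Submodule.map (word (a :: v.1)) R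
            ≤ ⨆ w : List.Vector (Fin 2) (((⟨(j : ℕ) + 1, hj⟩ : Fin N)) : ℕ),
                Submodule.map (word w.1) R :=
              le_iSup (fun w : List.Vector (Fin 2) (((⟨(j : ℕ) + 1, hj⟩ : Fin N)) : ℕ) =>
                Submodule.map (word w.1) R) ⟨a :: v.1, by simp [v.2]⟩
          _ ≤ U :=
              le_iSup (fun j : Fin N => ⨆ v : List.Vector (Fin 2) (j : ℕ),
                Submodule.map (word v.1) R) ⟨(j : ℕ) + 1, hj⟩
      · have hlen : (a :: v.1).length = N := by
          have hjN : (j : ℕ) + 1 = N := le_antisymm j.2 (not_lt.mp hj)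
          simp [v.2, hjN]
        calc Submodule.map (word (a :: v.1)) R
            ≤ LinearMap.range (word (a :: v.1)) := LinearMap.map_le_range
          _ ≤ R := hlR _ hlen
          _ ≤ U := hRU
    intro x hx
    exact hmap (Submodule.mem_map_of_mem hx)
  have hUφ : ∀ x ∈ U, φ x ∈ U := by
    intro x hx
    have h := hUinv 0 x hx
    rwa [hgg0] at h
  have hUψ : ∀ x ∈ U, ψ x ∈ U := by
    intro x hx
    have h := hUinv 1 x hx
    rwa [hgg1] at h
  have lemA : ∀ l : List (Fin 2), N ≤ l.length → LinearMap.range (word l) ≤ R := by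
    intro l hl
    have hsplit : word l = word (l.take N) * word (l.drop N) := by
      rw [← word_append, List.take_append_drop]
    rw [hsplit, Module.End.mul_eq_comp]
    refine le_trans (LinearMap.range_comp_le_range _ _) (hlR _ ?_)
    rw [List.length_take]
    exact Nat.min_eq_left hl
  set S : ℕ → Submodule k (V →ₗ[k] V) := fun j =>
      Submodule.span k {h | ∃ l : List (Fin 2), j ≤ l.length ∧ h = word l} with hS
  have hSmono : ∀ i j : ℕ, i ≤ j → S j ≤ S i := by
    intro i j hij
    apply Submodule.span_mono
    rintro h ⟨l, hl, rfl⟩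
    exact ⟨l, le_trans hij hl, rfl⟩
  have hSmul : ∀ i j : ℕ, ∀ a ∈ S i, ∀ b ∈ S j, a * b ∈ S (i + j) := by
    intro i j a ha b hb
    have hle : S i * S j ≤ S (i + j) := by
      rw [hS, Submodule.span_mul_span]
      apply Submodule.span_mono
      rintro x ⟨x₁, hx₁, x₂, hx₂, rfl⟩
      obtain ⟨l₁, hl₁, rfl⟩ := hx₁
      obtain ⟨l₂, hl₂, rfl⟩ := hx₂
      exact ⟨l₁ ++ l₂, by rw [List.length_append]; exact Nat.add_le_add hl₁ hl₂,
        (word_append l₁ l₂).symm⟩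
    exact hle (Submodule.mul_mem_mul ha hb)
  have hφS : φ ∈ S 1 := by
    have hw : word [0] = φ := by simp [hword, hgg0]
    exact Submodule.subset_span ⟨[0], by norm_num, hw.symm⟩
  have hψS : ψ ∈ S 1 := by
    have hw : word [1] = ψ := by simp [hword, hgg1]
    exact Submodule.subset_span ⟨[1], by norm_num, hw.symm⟩
  have hφψS : φ * ψ ∈ S 1 := by
    have hw : word [0, 1] = φ * ψ := by simp [hword, hgg0, hgg1]
    exact hSmono 1 2 one_le_two (Submodule.subset_span ⟨[0, 1], by norm_num, hw.symm⟩)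
  have hψφS : ψ * φ ∈ S 1 := by
    have hw : word [1, 0] = ψ * φ := by simp [hword, hgg0, hgg1]
    exact hSmono 1 2 one_le_two (Submodule.subset_span ⟨[1, 0], by norm_num, hw.symm⟩)
  have hαβS : φ + ψ + φ * ψ ∈ S 1 := add_mem (add_mem hφS hψS) hφψS
  have hβαS : ψ + φ + ψ * φ ∈ S 1 := add_mem (add_mem hψS hφS) hψφS
  have hpow : ∀ h ∈ S 1, ∀ j : ℕ, 1 ≤ j → h ^ j ∈ S j := by
    intro h hh j hj
    induction j with
    | zero => omega
    | succ j ih =>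
      rcases Nat.lt_or_ge 0 j with h1 | h1
      · have := hSmul j 1 (h ^ j) (ih h1) h hh
        rw [pow_succ]
        exact this
      · have hj0 : j = 0 := by omega
        subst hj0
        rw [pow_one]
        exact hh
  let J : Submodule k (V →ₗ[k] V) :=
    { carrier := {h | ∀ x : V, h x ∈ U}
      add_mem' := fun ha hb x => U.add_mem (ha x) (hb x)
      zero_mem' := fun x => by simpa using U.zero_mem
      smul_mem' := fun c h hh x => U.smul_mem c (hh x) }
  have hSNJ : S N ≤ J := by
    apply Submodule.span_le.mpr
    rintro h ⟨l, hl, rfl⟩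
    intro x
    exact hRU (lemA l hl (LinearMap.mem_range_self _ x))
  have hαβN : ∀ x : V, ((φ + ψ + φ * ψ) ^ N) x ∈ U := hSNJ (hpow _ hαβS N hN1)
  have hβαN : ∀ x : V, ((ψ + φ + ψ * φ) ^ N) x ∈ U := hSNJ (hpow _ hβαS N hN1)
  have hφrep : word (List.replicate N (0 : Fin 2)) = φ ^ N := by
    simp only [hword, List.map_replicate, List.prod_replicate]
    exact congrArg (fun t => t ^ N) hgg0
  have hψrep : word (List.replicate N (1 : Fin 2)) = ψ ^ N := by
    simp only [hword, List.map_replicate, List.prod_replicate]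
    exact congrArg (fun t => t ^ N) hgg1
  have hφN : ∀ x : V, (φ ^ N) x ∈ U := by
    intro x
    apply hRU
    apply lemA (List.replicate N (0 : Fin 2)) (by simp)
    rw [hφrep]
    exact LinearMap.mem_range_self _ x
  have hψN : ∀ x : V, (ψ ^ N) x ∈ U := by
    intro x
    apply hRU
    apply lemA (List.replicate N (1 : Fin 2)) (by simp)
    rw [hψrep]
    exact LinearMap.mem_range_self _ x
  -- finite potency
  have hfp1 : IsFinitePotent (φ + ψ + φ * ψ) := by
    refine ⟨N, hN1, ?_⟩
    have hle : LinearMap.range ((φ + ψ + φ * ψ) ^ N) ≤ U := by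
      rintro x ⟨y, rfl⟩; exact hαβN y
    exact Submodule.finiteDimensional_of_le hle
  have hfp2 : IsFinitePotent (ψ + φ + ψ * φ) := by
    refine ⟨N, hN1, ?_⟩
    have hle : LinearMap.range ((ψ + φ + ψ * φ) ^ N) ≤ U := by
      rintro x ⟨y, rfl⟩; exact hβαN y
    exact Submodule.finiteDimensional_of_le hle
  -- invariance of U under the combined maps
  have hUαβ : ∀ x ∈ U, (φ + ψ + φ * ψ) x ∈ U := by
    intro x hx
    have happ : (φ + ψ + φ * ψ) x = φ x + ψ x + φ (ψ x) := by
      simp [LinearMap.add_apply, Module.End.mul_apply]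
    rw [happ]
    exact U.add_mem (U.add_mem (hUφ x hx) (hUψ x hx)) (hUφ _ (hUψ x hx))
  have hUβα : ∀ x ∈ U, (ψ + φ + ψ * φ) x ∈ U := by
    intro x hx
    have happ : (ψ + φ + ψ * φ) x = ψ x + φ x + ψ (φ x) := by
      simp [LinearMap.add_apply, Module.End.mul_apply]
    rw [happ]
    exact U.add_mem (U.add_mem (hUψ x hx) (hUφ x hx)) (hUψ _ (hUφ x hx))
  -- sup invariance helper
  have supinv : ∀ (f : V →ₗ[k] V) (p q : Submodule k V), (∀ x ∈ p, f x ∈ p) →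
      (∀ x ∈ q, f x ∈ q) → ∀ x ∈ p ⊔ q, f x ∈ p ⊔ q := by
    intro f p q hp hq x hx
    obtain ⟨a, ha, b, hb, rfl⟩ := Submodule.mem_sup.mp hx
    rw [map_add]
    exact (p ⊔ q).add_mem (Submodule.mem_sup_left (hp a ha))
      (Submodule.mem_sup_right (hq b hb))
  -- transfer determinants to U
  have hZφinv : ∀ x ∈ Wφ ⊔ U, φ x ∈ Wφ ⊔ U := supinv φ Wφ U hWφinv hUφ
  have eφ : LinearMap.det ((1 + φ).restrict
      (fun x hx => Wφ.add_mem hx (hWφinv x hx) : ∀ x ∈ Wφ, (1 + φ) x ∈ Wφ)) =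
      LinearMap.det ((1 + φ).restrict
      (fun x hx => U.add_mem hx (hUφ x hx) : ∀ x ∈ U, (1 + φ) x ∈ U)) := by
    have e1 := aux_det_restrict_eq_of_le φ Wφ (Wφ ⊔ U) le_sup_left hWφinv hZφinv nφ
      (fun x => hrφ (LinearMap.mem_range_self _ x))
    have e2 := aux_det_restrict_eq_of_le φ U (Wφ ⊔ U) le_sup_right hUφ hZφinv N hφN
    rw [← e1, e2]
  have hZψinv : ∀ x ∈ Wψ ⊔ U, ψ x ∈ Wψ ⊔ U := supinv ψ Wψ U hWψinv hUψ
  have eψ : LinearMap.det ((1 + ψ).restrict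
      (fun x hx => Wψ.add_mem hx (hWψinv x hx) : ∀ x ∈ Wψ, (1 + ψ) x ∈ Wψ)) =
      LinearMap.det ((1 + ψ).restrict
      (fun x hx => U.add_mem hx (hUψ x hx) : ∀ x ∈ U, (1 + ψ) x ∈ U)) := by
    have e1 := aux_det_restrict_eq_of_le ψ Wψ (Wψ ⊔ U) le_sup_left hWψinv hZψinv nψ
      (fun x => hrψ (LinearMap.mem_range_self _ x))
    have e2 := aux_det_restrict_eq_of_le ψ U (Wψ ⊔ U) le_sup_right hUψ hZψinv N hψN
    rw [← e1, e2]
  have hZinv : ∀ x ∈ W ⊔ U, (φ + ψ + φ * ψ) x ∈ W ⊔ U :=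
    supinv _ W U hWinv hUαβ
  have eαβ : LinearMap.det ((1 + (φ + ψ + φ * ψ)).restrict
      (fun x hx => W.add_mem hx (hWinv x hx) : ∀ x ∈ W, (1 + (φ + ψ + φ * ψ)) x ∈ W)) =
      LinearMap.det ((1 + (φ + ψ + φ * ψ)).restrict
      (fun x hx => U.add_mem hx (hUαβ x hx) : ∀ x ∈ U, (1 + (φ + ψ + φ * ψ)) x ∈ U)) := by
    have e1 := aux_det_restrict_eq_of_le (φ + ψ + φ * ψ) W (W ⊔ U) le_sup_left hWinv hZinv n
      (fun x => hr (LinearMap.mem_range_self _ x))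
    have e2 := aux_det_restrict_eq_of_le (φ + ψ + φ * ψ) U (W ⊔ U) le_sup_right hUαβ hZinv N
      hαβN
    rw [← e1, e2]
  have hZ'inv : ∀ x ∈ W' ⊔ U, (ψ + φ + ψ * φ) x ∈ W' ⊔ U :=
    supinv _ W' U hW'inv hUβα
  have eβα : LinearMap.det ((1 + (ψ + φ + ψ * φ)).restrict
      (fun x hx => W'.add_mem hx (hW'inv x hx) : ∀ x ∈ W', (1 + (ψ + φ + ψ * φ)) x ∈ W')) =
      LinearMap.det ((1 + (ψ + φ + ψ * φ)).restrict
      (fun x hx => U.add_mem hx (hUβα x hx) : ∀ x ∈ U, (1 + (ψ + φ + ψ * φ)) x ∈ U)) := by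
    have e1 := aux_det_restrict_eq_of_le (ψ + φ + ψ * φ) W' (W' ⊔ U) le_sup_left hW'inv hZ'inv
      n' (fun x => hr' (LinearMap.mem_range_self _ x))
    have e2 := aux_det_restrict_eq_of_le (ψ + φ + ψ * φ) U (W' ⊔ U) le_sup_right hUβα hZ'inv N
      hβαN
    rw [← e1, e2]
  -- multiplicativity on U
  have hcompαβ : (1 + (φ + ψ + φ * ψ)).restrict
      (fun x hx => U.add_mem hx (hUαβ x hx) : ∀ x ∈ U, (1 + (φ + ψ + φ * ψ)) x ∈ U) =
      ((1 + φ).restrict (fun x hx => U.add_mem hx (hUφ x hx) : ∀ x ∈ U, (1 + φ) x ∈ U)) ∘ₗ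
      ((1 + ψ).restrict (fun x hx => U.add_mem hx (hUψ x hx) : ∀ x ∈ U, (1 + ψ) x ∈ U)) := by
    apply LinearMap.ext; intro x; apply Subtype.ext
    simp only [LinearMap.comp_apply, LinearMap.restrict_apply, LinearMap.add_apply,
      Module.End.one_apply, Module.End.mul_apply, map_add]
    abel
  have hcompβα : (1 + (ψ + φ + ψ * φ)).restrict
      (fun x hx => U.add_mem hx (hUβα x hx) : ∀ x ∈ U, (1 + (ψ + φ + ψ * φ)) x ∈ U) =
      ((1 + ψ).restrict (fun x hx => U.add_mem hx (hUψ x hx) : ∀ x ∈ U, (1 + ψ) x ∈ U)) ∘ₗ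
      ((1 + φ).restrict (fun x hx => U.add_mem hx (hUφ x hx) : ∀ x ∈ U, (1 + φ) x ∈ U)) := by
    apply LinearMap.ext; intro x; apply Subtype.ext
    simp only [LinearMap.comp_apply, LinearMap.restrict_apply, LinearMap.add_apply,
      Module.End.one_apply, Module.End.mul_apply, map_add]
    abel
  have hmulαβ := congrArg LinearMap.det hcompαβ
  rw [LinearMap.det_comp] at hmulαβ
  have hmulβα := congrArg LinearMap.det hcompβα
  rw [LinearMap.det_comp] at hmulβα
  refine ⟨hfp1, hfp2, ?_, ?_⟩
  · rw [eφ, eψ, eαβ, hmulαβ]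
  · rw [eαβ, eβα, hmulαβ, hmulβα, mul_comm]
end

section
/- Let φ and ψ be finite potent endomorphisms of a k-vector space V such that the commutator [φ,ψ] = φ∘ψ − ψ∘φ has finite rank (i.e., its image is finite-dimensional). Then φ + ψ is a finite potent endomorphism of V. -/
section Aux

variable {k V : Type*} [Field k] [AddCommGroup V] [Module k V]

private lemma range_add_le' (f g : V →ₗ[k] V) :
    LinearMap.range (f + g) ≤ LinearMap.range f ⊔ LinearMap.range g := by
  rintro x ⟨y, rfl⟩
  exact Submodule.add_mem_sup ⟨y, rfl⟩ ⟨y, rfl⟩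

private lemma finRank_add {f g : V →ₗ[k] V}
    (hf : FiniteDimensional k (LinearMap.range f))
    (hg : FiniteDimensional k (LinearMap.range g)) :
    FiniteDimensional k (LinearMap.range (f + g)) :=
  Submodule.finiteDimensional_of_le (range_add_le' f g)

private lemma finRank_mul_right (f : V →ₗ[k] V) {g : V →ₗ[k] V}
    (hg : FiniteDimensional k (LinearMap.range g)) :
    FiniteDimensional k (LinearMap.range (f * g)) := by
  have h : LinearMap.range (f * g) = (LinearMap.range g).map f := by
    rw [Module.End.mul_eq_comp, LinearMap.range_comp]
  rw [h]
  exact Module.Finite.map _ f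

private lemma finRank_mul_left {f : V →ₗ[k] V} (g : V →ₗ[k] V)
    (hf : FiniteDimensional k (LinearMap.range f)) :
    FiniteDimensional k (LinearMap.range (f * g)) := by
  have h : LinearMap.range (f * g) ≤ LinearMap.range f := by
    rintro x ⟨y, rfl⟩; exact ⟨g y, rfl⟩
  exact Submodule.finiteDimensional_of_le h

/-- The two-sided ring congruence on `End k V` identifying maps whose difference has
finite rank. -/
private def finRankCon (k V : Type*) [Field k] [AddCommGroup V] [Module k V] :
    RingCon (Module.End k V) where
  r f g := FiniteDimensional k (LinearMap.range (f - g))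
  iseqv := by
    constructor
    · intro f
      rw [sub_self, LinearMap.range_zero]
      infer_instance
    · intro f g h
      have : g - f = -(f - g) := by noncomm_ring
      rw [this, LinearMap.range_neg]
      exact h
    · intro f g h hfg hgh
      have : f - h = (f - g) + (g - h) := by noncomm_ring
      rw [this]
      exact finRank_add hfg hgh
  mul' := by
    intro w x y z hwx hyz
    show FiniteDimensional k (LinearMap.range (w * y - x * z))
    have h : w * y - x * z = w * (y - z) + (w - x) * z := by noncomm_ring
    rw [h]
    exact finRank_add (finRank_mul_right w hyz) (finRank_mul_left z hwx)
  add' := by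
    intro w x y z hwx hyz
    show FiniteDimensional k (LinearMap.range (w + y - (x + z)))
    have h : w + y - (x + z) = (w - x) + (y - z) := by noncomm_ring
    rw [h]
    exact finRank_add hwx hyz

private lemma finRankCon_iff (f g : Module.End k V) :
    finRankCon k V f g ↔ FiniteDimensional k (LinearMap.range (f - g)) := Iff.rfl

end Aux

/-- if `φ` and `ψ` are finite potent and their commutator `φψ - ψφ` has
finite rank, then `φ + ψ` is finite potent. -/
theorem isFinitePotent_add_of_finiteRank_commutator
    {k V : Type*} [Field k] [AddCommGroup V] [Module k V]
    (φ ψ : V →ₗ[k] V) (hφ : IsFinitePotent φ) (hψ : IsFinitePotent ψ)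
    (hcomm : FiniteDimensional k (LinearMap.range (φ * ψ - ψ * φ))) :
    IsFinitePotent (φ + ψ) := by
  obtain ⟨n, -, hn⟩ := hφ
  obtain ⟨m, -, hm⟩ := hψ
  set c := finRankCon k V
  -- pass to the quotient ring
  have hΦ : IsNilpotent ((φ : Module.End k V) : c.Quotient) := by
    refine ⟨n, ?_⟩
    rw [show ((φ:Module.End k V):c.Quotient)^n = (((φ^n:Module.End k V)):c.Quotient) from (RingCon.coe_pow _ _ _).symm]
    show ((φ ^ n : Module.End k V) : c.Quotient) = ((0 : Module.End k V) : c.Quotient)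
    rw [RingCon.eq, finRankCon_iff, sub_zero]
    exact hn
  have hΨ : IsNilpotent ((ψ : Module.End k V) : c.Quotient) := by
    refine ⟨m, ?_⟩
    rw [show ((ψ:Module.End k V):c.Quotient)^m = (((ψ^m:Module.End k V)):c.Quotient) from (RingCon.coe_pow _ _ _).symm]
    show ((ψ ^ m : Module.End k V) : c.Quotient) = ((0 : Module.End k V) : c.Quotient)
    rw [RingCon.eq, finRankCon_iff, sub_zero]
    exact hm
  have hC : Commute ((φ : Module.End k V) : c.Quotient) ((ψ : Module.End k V) : c.Quotient) := by
    show ((φ : Module.End k V) : c.Quotient) * _ = _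
    rw [← RingCon.coe_mul, ← RingCon.coe_mul, RingCon.eq, finRankCon_iff]
    exact hcomm
  obtain ⟨N, hN⟩ := hC.isNilpotent_add hΦ hΨ
  refine ⟨N + 1, le_add_self, ?_⟩
  have hN1 : (((φ + ψ : Module.End k V)) : c.Quotient) ^ (N + 1) = 0 := by
    rw [pow_succ, RingCon.coe_add, hN, zero_mul]
  have : (((φ + ψ) ^ (N + 1) : Module.End k V) : c.Quotient)
      = ((0 : Module.End k V) : c.Quotient) := by
    rw [RingCon.coe_pow]
    exact hN1
  rw [RingCon.eq, finRankCon_iff, sub_zero] at this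
  exact this
end

section
/- Let φ be a finite potent endomorphism of a k-vector space V and let W be an admissible subspace for φ. Then det((1+φ)|_W) ≠ 0 if and only if the endomorphism 1+φ : V → V is bijective. Equivalently, Det^k_V(1+φ) ≠ 0 if and only if 1+φ is invertible. -/
/-- for a finite potent endomorphism `φ` with admissible subspace `W`,
`det((1+φ)|_W) ≠ 0` if and only if `1+φ : V → V` is bijective, i.e.
`Det^k_V(1+φ) ≠ 0` if and only if `1+φ` is invertible. -/
theorem det_one_add_restrict_ne_zero_iff_bijective
    {k V : Type*} [Field k] [AddCommGroup V] [Module k V]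
    (φ : V →ₗ[k] V)
    (W : Submodule k V) (hWfin : FiniteDimensional k W)
    (hWinv : ∀ x ∈ W, φ x ∈ W)
    (n : ℕ) (hn : 1 ≤ n) (hr : LinearMap.range (φ ^ n) ≤ W) :
    LinearMap.det ((1 + φ).restrict
        (fun x hx => W.add_mem hx (hWinv x hx) : ∀ x ∈ W, (1 + φ) x ∈ W)) ≠ 0
      ↔ Function.Bijective ⇑(1 + φ) := by
  set f := (1 + φ).restrict
      (fun x hx => W.add_mem hx (hWinv x hx) : ∀ x ∈ W, (1 + φ) x ∈ W) with hfdef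
  have hfapp : ∀ x : W, (f x : V) = (1 + φ) (x : V) := fun x => rfl
  have hφnW : ∀ v : V, (φ ^ n) v ∈ W := fun v => hr ⟨v, rfl⟩
  -- det f ≠ 0 ↔ f injective
  have hdet_inj : LinearMap.det f ≠ 0 ↔ Function.Injective f := by
    constructor
    · intro hd
      let b := Module.finBasis k W
      have hd' : IsUnit (LinearMap.toMatrix b b f).det := by
        rw [LinearMap.det_toMatrix b f]
        exact isUnit_iff_ne_zero.mpr hd
      have hinj := (LinearEquiv.ofIsUnitDet hd').injective
      exact fun x y hxy => hinj hxy
    · intro hinj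
      have hbij : Function.Bijective f :=
        ⟨hinj, (LinearMap.injective_iff_surjective).mp hinj⟩
      exact ((LinearEquiv.ofBijective f hbij).isUnit_det').ne_zero
  rw [hdet_inj]
  -- geometric sum identity : (1 + φ) * q = 1 - (-φ)^n
  set q : V →ₗ[k] V := ∑ i ∈ Finset.range n, (-φ) ^ i with hq
  have hgeom : (1 + φ) * q = 1 - (-φ) ^ n := by
    have h2 : (∑ i ∈ Finset.range n, (-φ) ^ i) * (-φ - 1) = (-φ) ^ n - 1 :=
      geom_sum_mul (-φ) n
    have h3 : (1 + φ) * q = q * (1 + φ) := by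
      rw [hq, Finset.sum_mul, Finset.mul_sum]
      refine Finset.sum_congr rfl fun i _ => ?_
      have hcomm : Commute (1 + φ) ((-φ) ^ i) :=
        (((Commute.one_left φ).add_left (Commute.refl φ)).neg_right).pow_right i
      exact hcomm.eq
    have h4 : q * (1 + φ) = -(q * (-φ - 1)) := by
      rw [← mul_neg]
      congr 1
      abel
    rw [h3, h4, hq, h2, neg_sub]
  have hnegpow : ∀ (m : ℕ) (v : V), ((-φ) ^ m) v = ((-1 : k) ^ m) • (φ ^ m) v := by
    intro m v
    rw [show (-φ) = (-1 : k) • φ by simp, smul_pow, LinearMap.smul_apply]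
  constructor
  · intro hinj
    have hsurjW : Function.Surjective f :=
      (LinearMap.injective_iff_surjective).mp hinj
    constructor
    · -- injectivity of 1 + φ
      rw [← LinearMap.ker_eq_bot, LinearMap.ker_eq_bot']
      intro x hx
      have hx0 : x + φ x = 0 := by simpa using hx
      have hφx : φ x = -x := by rwa [add_comm, add_eq_zero_iff_eq_neg] at hx0
      have hpow : ∀ m : ℕ, (φ ^ m) x = ((-1 : k) ^ m) • x := by
        intro m
        induction m with
        | zero => simp
        | succ p ih =>
          rw [pow_succ, Module.End.mul_apply, hφx, map_neg, ih]
          simp [pow_succ, mul_comm, mul_smul]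
      have h1 : ((-1 : k) ^ n) • x ∈ W := hpow n ▸ hφnW x
      have hxW : x ∈ W := by
        have h2 := W.smul_mem ((-1 : k) ^ n) h1
        rwa [smul_smul, ← pow_add, Even.neg_one_pow ⟨n, rfl⟩, one_smul] at h2
      have hfz : f ⟨x, hxW⟩ = 0 := by
        apply Subtype.ext
        show (1 + φ) x = 0
        simpa using hx0
      have := hinj (by rw [hfz, map_zero] : f ⟨x, hxW⟩ = f 0)
      exact congrArg Subtype.val this
    · -- surjectivity of 1 + φ
      intro y
      have hzW : ((-φ) ^ n) y ∈ W := by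
        rw [hnegpow]
        exact W.smul_mem _ (hφnW y)
      obtain ⟨w, hw⟩ := hsurjW ⟨((-φ) ^ n) y, hzW⟩
      refine ⟨q y + (w : V), ?_⟩
      have h1 : (1 + φ) (q y) = y - ((-φ) ^ n) y := by
        have := congrArg (fun g : V →ₗ[k] V => g y) hgeom
        simpa [Module.End.mul_apply, LinearMap.sub_apply] using this
      have h2 : (1 + φ) (w : V) = ((-φ) ^ n) y := by
        have := congrArg Subtype.val hw
        simpa [hfapp] using this
      rw [map_add, h1, h2]; abel
  · intro hbij
    intro a b hab
    apply Subtype.ext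
    apply hbij.injective
    have := congrArg Subtype.val hab
    simpa [hfapp] using this
end

section
/- Let φ be a finite potent endomorphism of a k-vector space V and suppose δ ∈ End_k(V) satisfies δ∘(1+φ) = id_V = (1+φ)∘δ. Then ψ := δ − 1 is a finite potent endomorphism of V; moreover ψ = −φ∘δ = −δ∘φ and, if φ^n(V) ⊆ W with W finite-dimensional, then ψ^n(V) ⊆ δ^n(W). -/
/-- if `φ` is finite potent and `δ` is a two-sided inverse of `1+φ`, then
`ψ := δ - 1` is finite potent; moreover `ψ = -φδ = -δφ` and if `φ^n(V) ⊆ W` with `W`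
finite-dimensional then `ψ^n(V) ⊆ δ^n(W)`. -/
theorem isFinitePotent_inverse_sub_one
    {k V : Type*} [Field k] [AddCommGroup V] [Module k V]
    (φ δ : V →ₗ[k] V) (hφ : IsFinitePotent φ)
    (hδl : δ * (1 + φ) = 1) (hδr : (1 + φ) * δ = 1) :
    IsFinitePotent (δ - 1) ∧
    δ - 1 = -(φ * δ) ∧ δ - 1 = -(δ * φ) ∧
    ∀ (n : ℕ) (W : Submodule k V), FiniteDimensional k W →
      LinearMap.range (φ ^ n) ≤ W →
      LinearMap.range ((δ - 1) ^ n) ≤ Submodule.map (δ ^ n) W := by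
  have h1 : δ - 1 = -(φ * δ) := by rw [← hδr, add_mul, one_mul]; abel
  have h2 : δ - 1 = -(δ * φ) := by rw [← hδl, mul_add, mul_one]; abel
  have hcomm : Commute δ φ := by
    have : -(φ * δ) = -(δ * φ) := h1 ▸ h2
    exact (neg_injective this).symm
  have key : ∀ (n : ℕ) (W : Submodule k V),
      LinearMap.range (φ ^ n) ≤ W →
      LinearMap.range ((δ - 1) ^ n) ≤ Submodule.map (δ ^ n) W := by
    intro n W hW
    rintro _ ⟨y, rfl⟩
    have hpow : (δ - 1) ^ n = (-1 : k) ^ n • (δ ^ n * φ ^ n) := by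
      rw [h2, ← neg_one_smul k (δ * φ), smul_pow, hcomm.mul_pow]
    rw [hpow]
    simp only [LinearMap.smul_apply, Module.End.mul_apply]
    exact Submodule.smul_mem _ _ (Submodule.mem_map_of_mem (hW ⟨y, rfl⟩))
  refine ⟨?_, h1, h2, fun n W _ hW => key n W hW⟩
  obtain ⟨n, hn, hfin⟩ := hφ
  refine ⟨n, hn, ?_⟩
  have := key n (LinearMap.range (φ ^ n)) le_rfl
  exact Submodule.finiteDimensional_of_le this
end

section
/- Let k be an algebraically closed field, φ a finite potent endomorphism of a k-vector space V, and W an admissible subspace for φ. Then (i) a nonzero scalar λ ∈ k is an eigenvalue of φ on V if and only if λ is a root of the characteristic polynomial of φ|_W; and (ii) det((1+φ)|_W) = ∏_{λ} (1+λ), the product taken over the multiset of roots (with multiplicity) of the characteristic polynomial of φ|_W. Since roots λ = 0 contribute factors 1+0 = 1, this says Det^k_V(1+φ) = ∏_{i=1}^{N}(1+λᵢ), where λ₁,…,λ_N are the nonzero eigenvalues of φ counted with algebraic multiplicity. -/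
open Polynomial

/-- Evaluating the characteristic polynomial of an endomorphism at `μ` gives the
determinant of `μ • 1 - f`. -/
lemma charpoly_eval_aux {K W : Type*} [Field K] [AddCommGroup W] [Module K W]
    [FiniteDimensional K W] (f : W →ₗ[K] W) (μ : K) :
    f.charpoly.eval μ = LinearMap.det (μ • (1 : W →ₗ[K] W) - f) := by
  classical
  let b := Module.finBasis K W
  rw [← LinearMap.charpoly_toMatrix f b, ← LinearMap.det_toMatrix b, Matrix.charpoly,
    ← Polynomial.coe_evalRingHom, RingHom.map_det]
  congr 1
  ext i j
  by_cases h : i = j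
  · subst h
    simp [Matrix.charmatrix_apply_eq, LinearMap.toMatrix_one, Matrix.one_apply,
      Matrix.smul_apply]
  · simp [Matrix.charmatrix_apply_ne _ _ _ h, LinearMap.toMatrix_one, Matrix.one_apply, h,
      Matrix.smul_apply]

/-- In finite dimension over a field, a scalar `μ` is a root of the characteristic
polynomial iff there is a nonzero eigenvector for `μ`. -/
lemma isRoot_charpoly_iff_aux {K W : Type*} [Field K] [AddCommGroup W] [Module K W]
    [FiniteDimensional K W] (f : W →ₗ[K] W) (μ : K) :
    f.charpoly.IsRoot μ ↔ ∃ w : W, w ≠ 0 ∧ f w = μ • w := by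
  constructor
  · intro h
    rw [Polynomial.IsRoot, charpoly_eval_aux] at h
    have hk := LinearMap.bot_lt_ker_of_det_eq_zero h
    obtain ⟨w, hw, hw0⟩ := (Submodule.ne_bot_iff _).mp hk.ne'
    refine ⟨w, hw0, ?_⟩
    have : μ • w - f w = 0 := hw
    have := sub_eq_zero.mp this
    exact this.symm
  · rintro ⟨w, hw0, hw⟩
    have hev : Module.End.HasEigenvalue f μ :=
      Module.End.hasEigenvalue_of_hasEigenvector
        ⟨(Module.End.mem_eigenspace_iff).mpr hw, hw0⟩
    have hmin : (minpoly K f).IsRoot μ := Module.End.hasEigenvalue_iff_isRoot.mp hev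
    exact hmin.dvd (LinearMap.minpoly_dvd_charpoly f)

/-- over an algebraically closed field, for a finite potent `φ` with
admissible subspace `W`: (i) a nonzero `λ` is an eigenvalue of `φ` on `V` iff it is a
root of the characteristic polynomial of `φ|_W`; (ii) `Det^k_V(1+φ)` equals the product
of `1+λ` over the multiset of roots of the characteristic polynomial of `φ|_W`
(the nonzero eigenvalues of `φ` counted with algebraic multiplicity). -/
theorem det_one_add_eq_prod_one_add_eigenvalues
    {k V : Type*} [Field k] [IsAlgClosed k] [AddCommGroup V] [Module k V]
    (φ : V →ₗ[k] V)
    (W : Submodule k V) (hWfin : FiniteDimensional k W)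
    (hWinv : ∀ x ∈ W, φ x ∈ W)
    (n : ℕ) (hn : 1 ≤ n) (hr : LinearMap.range (φ ^ n) ≤ W) :
    (∀ l : k, l ≠ 0 →
      ((∃ v : V, v ≠ 0 ∧ φ v = l • v) ↔ (LinearMap.charpoly (φ.restrict hWinv)).IsRoot l)) ∧
    LinearMap.det ((1 + φ).restrict
        (fun x hx => W.add_mem hx (hWinv x hx) : ∀ x ∈ W, (1 + φ) x ∈ W))
      = ((LinearMap.charpoly (φ.restrict hWinv)).roots.map (fun l => 1 + l)).prod := by
  set f := φ.restrict hWinv with hf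
  constructor
  · -- part (i)
    intro l hl
    rw [isRoot_charpoly_iff_aux]
    constructor
    · rintro ⟨v, hv0, hv⟩
      -- v lies in W since v = (l^n)⁻¹ • φ^n v and φ^n v ∈ W
      have hpow : ∀ m : ℕ, (φ ^ m) v = l ^ m • v := by
        intro m
        induction m with
        | zero => simp
        | succ m ih =>
          rw [pow_succ', Module.End.mul_apply, ih, map_smul, hv, smul_smul, ← pow_succ]
      have hvW : v ∈ W := by
        have h1 : (φ ^ n) v ∈ W := hr ⟨v, rfl⟩
        have h2 : (l ^ n) • v ∈ W := by rwa [← hpow]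
        have := W.smul_mem ((l ^ n)⁻¹) h2
        rwa [smul_smul, inv_mul_cancel₀ (pow_ne_zero _ hl), one_smul] at this
      refine ⟨⟨v, hvW⟩, ?_, ?_⟩
      · simpa [Submodule.mk_eq_zero] using hv0
      · apply Subtype.ext
        simpa [hf, LinearMap.restrict_apply] using hv
    · rintro ⟨w, hw0, hw⟩
      refine ⟨(w : V), ?_, ?_⟩
      · simpa using fun h => hw0 (Subtype.ext h)
      · have := congrArg (Subtype.val) hw
        simpa [hf, LinearMap.restrict_apply] using this
  · -- part (ii)
    have hrestr : (1 + φ).restrict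
        (fun x hx => W.add_mem hx (hWinv x hx) : ∀ x ∈ W, (1 + φ) x ∈ W)
        = 1 + f := by
      ext x
      simp [hf, LinearMap.restrict_apply]
    rw [hrestr]
    have hmonic : f.charpoly.Monic := f.charpoly_monic
    have hsplits : f.charpoly.Splits := IsAlgClosed.splits _
    have hcard : f.charpoly.roots.card = Module.finrank k W := by
      rw [(Polynomial.splits_iff_card_roots).mp hsplits, LinearMap.charpoly_natDegree]
    have heval := charpoly_eval_aux f (-1)
    have hleft : ((-1 : k) • (1 : W →ₗ[k] W) - f) = (-1 : k) • (1 + f) := by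
      module
    rw [hleft, LinearMap.det_smul] at heval
    have hfact := hsplits.eq_prod_roots_of_monic hmonic
    have heval2 : f.charpoly.eval (-1)
        = (f.charpoly.roots.map (fun l => -1 - l)).prod := by
      conv_lhs => rw [hfact]
      rw [Polynomial.eval_multiset_prod, Multiset.map_map]
      congr 1
      apply Multiset.map_congr rfl
      intro l _
      simp
    have hneg : (f.charpoly.roots.map (fun l => (-1 : k) - l)).prod
        = (-1 : k) ^ Module.finrank k W * (f.charpoly.roots.map (fun l => 1 + l)).prod := by
      have : (f.charpoly.roots.map (fun l => (-1 : k) - l))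
          = (f.charpoly.roots.map (fun l => (-1 : k) * (1 + l))) := by
        apply Multiset.map_congr rfl
        intro l _
        ring
      rw [this]
      rw [show (fun l => (-1 : k) * (1 + l)) = fun l => (fun _ => (-1 : k)) l * (1 + l)
        from rfl]
      rw [Multiset.prod_map_mul, Multiset.map_const', Multiset.prod_replicate, hcard]
    have key : (-1 : k) ^ Module.finrank k W * LinearMap.det (1 + f)
        = (-1 : k) ^ Module.finrank k W
          * (f.charpoly.roots.map (fun l => 1 + l)).prod := by
      rw [← heval, heval2, hneg]
    exact mul_left_cancel₀ (pow_ne_zero _ (neg_ne_zero.mpr one_ne_zero)) key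
end
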